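/- Let $\mathcal{Y}, \mathcal{Z}, \mathcal{Y}_k, \mathcal{Z}_k \in \mathbb{R}^{p \times n}$ and let $\mathcal{U} \in \mathbb{R}^{p \times p}$ be symmetric positive definite. If the symmetric block matrix $\begin{bmatrix} \mathrm{Sym}\big((\mathcal{Y} - \mathcal{Y}_k)^\top \mathcal{Z}_k + \mathcal{Y}_k^\top(\mathcal{Z} - \mathcal{Z}_k) + \mathcal{Y}_k^\top \mathcal{Z}_k\big) & (\mathcal{Y} - \mathcal{Y}_k)^\top & (\mathcal{Z} - \mathcal{Z}_k)^\top \\ \mathcal{Y} - \mathcal{Y}_k & -\mathcal{U} & 0 \\ \mathcal{Z} - \mathcal{Z}_k & 0 & -\mathcal{U}^{-1} \end{bmatrix} \preceq 0$, then $\mathrm{Sym}(\mathcal{Y}^\top \mathcal{Z}) \preceq 0$. -/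

import Mathlib

open Matrix

private lemma dp_t {m n : Type*} [Fintype m] [Fintype n]
    (A : Matrix m n ℝ) (x : n → ℝ) (y : m → ℝ) :
    x ⬝ᵥ (Aᵀ *ᵥ y) = (A *ᵥ x) ⬝ᵥ y := by
  rw [Matrix.dotProduct_mulVec, Matrix.vecMul_transpose]

theorem linearization_lemma {p n : ℕ}
    (Y Z Yk Zk : Matrix (Fin p) (Fin n) ℝ)
    (U : Matrix (Fin p) (Fin p) ℝ) (hU : U.PosDef)
    (hblk : (-(Matrix.fromBlocks
        (((Y - Yk)ᵀ * Zk + Ykᵀ * (Z - Zk) + Ykᵀ * Zk)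
          + ((Y - Yk)ᵀ * Zk + Ykᵀ * (Z - Zk) + Ykᵀ * Zk)ᵀ)
        (Matrix.fromCols (Y - Yk)ᵀ (Z - Zk)ᵀ)
        (Matrix.fromRows (Y - Yk) (Z - Zk))
        (Matrix.fromBlocks (-U) 0 0 (-U⁻¹)))).PosSemidef) :
    (-(Yᵀ * Z + (Yᵀ * Z)ᵀ)).PosSemidef := by
  obtain ⟨-, hq⟩ := posSemidef_iff_dotProduct_mulVec.mp hblk
  have hUdet : IsUnit U.det := hU.det_pos.ne'.isUnit
  have hUU : U * U⁻¹ = 1 := Matrix.mul_nonsing_inv U hUdet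
  have hUU' : U⁻¹ * U = 1 := Matrix.nonsing_inv_mul U hUdet
  have hUsym : Uᵀ = U := hU.isHermitian.eq
  have hUinv : (U⁻¹).PosDef := hU.inv
  refine posSemidef_iff_dotProduct_mulVec.mpr ⟨?_, ?_⟩
  · show (-(Yᵀ * Z + (Yᵀ * Z)ᵀ))ᴴ = _
    simp [Matrix.conjTranspose, Matrix.transpose_add]
    ext i j
    simp [Matrix.transpose_apply]
    ring
  · intro x
    set L := (Y - Yk)ᵀ * Zk + Ykᵀ * (Z - Zk) + Ykᵀ * Zk with hL
    set a := (Y - Yk) *ᵥ x with ha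
    set b := (Z - Zk) *ᵥ x with hb
    have h := hq (Sum.elim x (Sum.elim (U⁻¹ *ᵥ a) (U *ᵥ b)))
    simp only [star_trivial, Matrix.neg_mulVec, Matrix.fromBlocks_mulVec,
      Matrix.fromCols_mulVec_sumElim, Matrix.fromRows_mulVec,
      sumElim_dotProduct_sumElim, dotProduct_neg,
      Matrix.add_mulVec, Matrix.mulVec_add, dotProduct_add,
      Matrix.zero_mulVec, Matrix.mulVec_zero, add_zero, zero_add,
      Sum.elim_comp_inl, Sum.elim_comp_inr, dp_t,
      Sum.elim_inl, Sum.elim_inr, ← ha, ← hb] at h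
    simp only [Matrix.mulVec_mulVec, hUU, hUU', Matrix.neg_mul, Matrix.zero_mul,
      Matrix.neg_mulVec, Matrix.one_mulVec, Matrix.zero_mulVec,
      dotProduct_neg, dotProduct_zero, add_zero, zero_add] at h
    -- Young's inequality
    have hy := hUinv.posSemidef.dotProduct_mulVec_nonneg (a - U *ᵥ b)
    simp only [star_trivial, Matrix.mulVec_sub, Matrix.mulVec_mulVec, hUU',
      Matrix.one_mulVec, dotProduct_sub, sub_dotProduct] at hy
    have hcomm1 : (U *ᵥ b) ⬝ᵥ (U⁻¹ *ᵥ a) = b ⬝ᵥ a := by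
      rw [← dp_t U b (U⁻¹ *ᵥ a), Matrix.mulVec_mulVec, hUsym, hUU, Matrix.one_mulVec]
    have hc1 : (U⁻¹ *ᵥ a) ⬝ᵥ a = a ⬝ᵥ (U⁻¹ *ᵥ a) := dotProduct_comm _ _
    have hc2 : (U *ᵥ b) ⬝ᵥ b = b ⬝ᵥ (U *ᵥ b) := dotProduct_comm _ _
    have hc3 : b ⬝ᵥ a = a ⬝ᵥ b := dotProduct_comm _ _
    rw [hcomm1, hc3] at hy
    -- matrix identity
    have hid : Yᵀ * Z = (Y - Yk)ᵀ * (Z - Zk) + L := by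
      rw [hL]
      simp only [Matrix.transpose_sub, Matrix.sub_mul, Matrix.mul_sub]
      abel
    simp only [star_trivial, hid, Matrix.transpose_add, Matrix.transpose_mul,
      Matrix.transpose_transpose, Matrix.neg_mulVec, dotProduct_neg,
      Matrix.add_mulVec, dotProduct_add, ← Matrix.mulVec_mulVec, dp_t,
      ← ha, ← hb]
    linarith [h, hy, hc1, hc2, hc3]
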